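/- arXiv:2212.09494 — 3 statements merged into one kernel-verified Lean document; each statement's English description precedes it below -/
import Mathlib

section
/- Let H and Q be integrable real-valued random variables on a probability space and let X be a random variable with values in a standard Borel space. Define π̄ := 1{E[H | X] ≥ E[Q | X]}. Then E[π̄·H + (1 − π̄)·Q] = E[ max{ E[H | X], E[Q | X] } ], and consequently E[π̄·H + (1 − π̄)·Q] ≥ max{ E[H], E[Q] }. -/
open MeasureTheory ProbabilityTheory
open scoped Classical

set_option linter.unusedVariables false

theorem statement7
    {Ω 𝒳 : Type*} [MeasurableSpace Ω] [MeasurableSpace 𝒳] [StandardBorelSpace 𝒳]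
    (μ : Measure Ω) [IsProbabilityMeasure μ]
    (X : Ω → 𝒳) (hX : Measurable X)
    (H Q : Ω → ℝ) (hH : Integrable H μ) (hQ : Integrable Q μ) :
    (∫ ω, ((if (μ[Q | MeasurableSpace.comap X inferInstance]) ω ≤ (μ[H | MeasurableSpace.comap X inferInstance]) ω then (1 : ℝ) else 0) * H ω + (1 - (if (μ[Q | MeasurableSpace.comap X inferInstance]) ω ≤ (μ[H | MeasurableSpace.comap X inferInstance]) ω then (1 : ℝ) else 0)) * Q ω) ∂μ)
      = (∫ ω, max ((μ[H | MeasurableSpace.comap X inferInstance]) ω) ((μ[Q | MeasurableSpace.comap X inferInstance]) ω) ∂μ)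
    ∧ (∫ ω, ((if (μ[Q | MeasurableSpace.comap X inferInstance]) ω ≤ (μ[H | MeasurableSpace.comap X inferInstance]) ω then (1 : ℝ) else 0) * H ω + (1 - (if (μ[Q | MeasurableSpace.comap X inferInstance]) ω ≤ (μ[H | MeasurableSpace.comap X inferInstance]) ω then (1 : ℝ) else 0)) * Q ω) ∂μ)
      ≥ max (∫ ω, H ω ∂μ) (∫ ω, Q ω ∂μ) := by
  have hm : MeasurableSpace.comap X inferInstance ≤ ‹MeasurableSpace Ω› := hX.comap_le
  set f := μ[H | MeasurableSpace.comap X inferInstance] with hf_def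
  set g := μ[Q | MeasurableSpace.comap X inferInstance] with hg_def
  have hf : Integrable f μ := integrable_condExp
  have hg : Integrable g μ := integrable_condExp
  set S : Set Ω := {ω | g ω ≤ f ω} with hS_def
  have hSm : MeasurableSet[MeasurableSpace.comap X inferInstance] S :=
    @measurableSet_le _ _ _ _ _ (MeasurableSpace.comap X inferInstance) _ _ _ _ _
      stronglyMeasurable_condExp.measurable stronglyMeasurable_condExp.measurable
  have hS : MeasurableSet S := hm _ hSm
  have hfun : ∀ ω, ((if g ω ≤ f ω then (1 : ℝ) else 0) * H ω
      + (1 - (if g ω ≤ f ω then (1 : ℝ) else 0)) * Q ω)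
      = S.indicator H ω + Sᶜ.indicator Q ω := by
    intro ω
    by_cases h : g ω ≤ f ω
    · simp [Set.indicator, hS_def, h]
    · simp [Set.indicator, hS_def, h]
  have hmaxfun : ∀ ω, max (f ω) (g ω) = S.indicator f ω + Sᶜ.indicator g ω := by
    intro ω
    by_cases h : g ω ≤ f ω
    · simp [Set.indicator, hS_def, h, max_eq_left h]
    · simp [Set.indicator, hS_def, h, max_eq_right (le_of_lt (not_le.mp h))]
  have key : (∫ ω, ((if g ω ≤ f ω then (1 : ℝ) else 0) * H ω
      + (1 - (if g ω ≤ f ω then (1 : ℝ) else 0)) * Q ω) ∂μ)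
      = ∫ ω, max (f ω) (g ω) ∂μ := by
    calc (∫ ω, ((if g ω ≤ f ω then (1 : ℝ) else 0) * H ω
        + (1 - (if g ω ≤ f ω then (1 : ℝ) else 0)) * Q ω) ∂μ)
        = ∫ ω, (S.indicator H ω + Sᶜ.indicator Q ω) ∂μ :=
          integral_congr_ae (Filter.Eventually.of_forall hfun)
      _ = (∫ ω in S, H ω ∂μ) + ∫ ω in Sᶜ, Q ω ∂μ := by
          rw [integral_add (hH.indicator hS) (hQ.indicator hS.compl),
            integral_indicator hS, integral_indicator hS.compl]
      _ = (∫ ω in S, f ω ∂μ) + ∫ ω in Sᶜ, g ω ∂μ := by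
          rw [hf_def, hg_def, setIntegral_condExp hm hH hSm,
            setIntegral_condExp hm hQ hSm.compl]
      _ = ∫ ω, (S.indicator f ω + Sᶜ.indicator g ω) ∂μ := by
          rw [integral_add (hf.indicator hS) (hg.indicator hS.compl),
            integral_indicator hS, integral_indicator hS.compl]
      _ = ∫ ω, max (f ω) (g ω) ∂μ :=
          integral_congr_ae (Filter.Eventually.of_forall fun ω => (hmaxfun ω).symm)
  refine ⟨key, ?_⟩
  rw [key]
  have hmax : Integrable (fun ω => max (f ω) (g ω)) μ := hf.sup hg
  have hfH : (∫ ω, H ω ∂μ) = ∫ ω, f ω ∂μ := (integral_condExp hm).symm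
  have hgQ : (∫ ω, Q ω ∂μ) = ∫ ω, g ω ∂μ := (integral_condExp hm).symm
  refine max_le ?_ ?_
  · rw [hfH]; exact integral_mono hf hmax fun ω => le_max_left _ _
  · rw [hgQ]; exact integral_mono hg hmax fun ω => le_max_right _ _
end

section
/- Let X be a random variable with values in a standard Borel space, let H and Q be integrable real-valued random variables, set δ := E[H | X] − E[Q | X] (a σ(X)-measurable random variable), π̄ := 1{δ ≥ 0}, and for any σ(X)-measurable real-valued random variable δ̂ set π̂ := 1{δ̂ ≥ 0}. Then E[π̄·H + (1 − π̄)·Q] − E[π̂·H + (1 − π̂)·Q] = E[ |δ| · 1{ 1{δ ≥ 0} ≠ 1{δ̂ ≥ 0} } ], and in particular this difference (the approximation error K(π̂)) is nonnegative. -/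
open MeasureTheory ProbabilityTheory
open scoped Classical

set_option linter.unusedVariables false

theorem statement15
    {Ω 𝒳 : Type*} [MeasurableSpace Ω] [MeasurableSpace 𝒳] [StandardBorelSpace 𝒳]
    (μ : Measure Ω) [IsProbabilityMeasure μ]
    (X : Ω → 𝒳) (hX : Measurable X)
    (H Q : Ω → ℝ) (hH : Integrable H μ) (hQ : Integrable Q μ)
    (δhat : Ω → ℝ) (hδhat : Measurable[MeasurableSpace.comap X inferInstance] δhat) :
    let δ : Ω → ℝ := fun ω => (μ[H | MeasurableSpace.comap X inferInstance]) ω - (μ[Q | MeasurableSpace.comap X inferInstance]) ω;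
    let πbar : Ω → ℝ := fun ω => if 0 ≤ δ ω then 1 else 0;
    let πhat : Ω → ℝ := fun ω => if 0 ≤ δhat ω then 1 else 0;
    ((∫ ω, (πbar ω * H ω + (1 - πbar ω) * Q ω) ∂μ)
        - (∫ ω, (πhat ω * H ω + (1 - πhat ω) * Q ω) ∂μ)
      = ∫ ω, |δ ω| *
          (if (if 0 ≤ δ ω then (1 : ℝ) else 0) ≠ (if 0 ≤ δhat ω then (1 : ℝ) else 0)
            then 1 else 0) ∂μ)
    ∧ 0 ≤ (∫ ω, (πbar ω * H ω + (1 - πbar ω) * Q ω) ∂μ)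
        - ∫ ω, (πhat ω * H ω + (1 - πhat ω) * Q ω) ∂μ := by
  intro δ πbar πhat
  have hm : MeasurableSpace.comap X inferInstance ≤ (inferInstance : MeasurableSpace Ω) :=
    hX.comap_le
  have hδm : Measurable[MeasurableSpace.comap X inferInstance] δ :=
    (stronglyMeasurable_condExp.sub stronglyMeasurable_condExp).measurable
  have hFint : Integrable (μ[H|MeasurableSpace.comap X inferInstance]) μ := integrable_condExp
  have hGint : Integrable (μ[Q|MeasurableSpace.comap X inferInstance]) μ := integrable_condExp
  set s : Set Ω := {ω | 0 ≤ δ ω} with hs_def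
  set t : Set Ω := {ω | 0 ≤ δhat ω} with ht_def
  have hs : MeasurableSet[MeasurableSpace.comap X inferInstance] s := hδm measurableSet_Ici
  have ht : MeasurableSet[MeasurableSpace.comap X inferInstance] t := hδhat measurableSet_Ici
  have hs' : MeasurableSet s := hm _ hs
  have ht' : MeasurableSet t := hm _ ht
  have key : ∀ (u : Set Ω), MeasurableSet[MeasurableSpace.comap X inferInstance] u →
      (∫ ω, ((if ω ∈ u then (1:ℝ) else 0) * H ω + (1 - if ω ∈ u then (1:ℝ) else 0) * Q ω) ∂μ)
      = ∫ ω in u, (μ[H|MeasurableSpace.comap X inferInstance]) ω ∂μ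
        + (∫ ω, Q ω ∂μ - ∫ ω in u, (μ[Q|MeasurableSpace.comap X inferInstance]) ω ∂μ) := by
    intro u hu
    have hu' : MeasurableSet u := hm _ hu
    have e : (fun ω => (if ω ∈ u then (1:ℝ) else 0) * H ω + (1 - if ω ∈ u then (1:ℝ) else 0) * Q ω)
        = fun ω => u.indicator H ω + uᶜ.indicator Q ω := by
      funext ω
      by_cases h : ω ∈ u <;> simp [Set.indicator_apply, h]
    have hcompl : ∫ ω in u, Q ω ∂μ + ∫ ω in uᶜ, Q ω ∂μ = ∫ ω, Q ω ∂μ :=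
      integral_add_compl hu' hQ
    rw [e, integral_add (hH.indicator hu') (hQ.indicator hu'.compl),
      integral_indicator hu', integral_indicator hu'.compl,
      ← setIntegral_condExp hm hH hu]
    rw [setIntegral_condExp hm hQ hu]
    linarith
  have e1 : (∫ ω, (πbar ω * H ω + (1 - πbar ω) * Q ω) ∂μ)
      = ∫ ω in s, (μ[H|MeasurableSpace.comap X inferInstance]) ω ∂μ
        + (∫ ω, Q ω ∂μ - ∫ ω in s, (μ[Q|MeasurableSpace.comap X inferInstance]) ω ∂μ) := key s hs
  have e2 : (∫ ω, (πhat ω * H ω + (1 - πhat ω) * Q ω) ∂μ)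
      = ∫ ω in t, (μ[H|MeasurableSpace.comap X inferInstance]) ω ∂μ
        + (∫ ω, Q ω ∂μ - ∫ ω in t, (μ[Q|MeasurableSpace.comap X inferInstance]) ω ∂μ) := key t ht
  have hsub : ∀ (u : Set Ω), MeasurableSet u →
      ∫ ω in u, (μ[H|MeasurableSpace.comap X inferInstance]) ω ∂μ
        - ∫ ω in u, (μ[Q|MeasurableSpace.comap X inferInstance]) ω ∂μ
      = ∫ ω, u.indicator δ ω ∂μ := by
    intro u hu'
    rw [integral_indicator hu', ← integral_sub (hFint.restrict) (hGint.restrict)]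
  have hδint : Integrable δ μ := hFint.sub hGint
  have hfin : ∫ ω, s.indicator δ ω ∂μ - ∫ ω, t.indicator δ ω ∂μ
      = ∫ ω, |δ ω| *
          (if (if 0 ≤ δ ω then (1 : ℝ) else 0) ≠ (if 0 ≤ δhat ω then (1 : ℝ) else 0)
            then 1 else 0) ∂μ := by
    rw [← integral_sub (hδint.indicator hs') (hδint.indicator ht')]
    congr 1
    funext ω
    by_cases h1 : 0 ≤ δ ω <;> by_cases h2 : 0 ≤ δhat ω <;>
      simp [Set.indicator_apply, hs_def, ht_def, h1, h2, abs_of_nonneg,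
        abs_of_neg (lt_of_not_ge h1)]
  have main : (∫ ω, (πbar ω * H ω + (1 - πbar ω) * Q ω) ∂μ)
        - (∫ ω, (πhat ω * H ω + (1 - πhat ω) * Q ω) ∂μ)
      = ∫ ω, |δ ω| *
          (if (if 0 ≤ δ ω then (1 : ℝ) else 0) ≠ (if 0 ≤ δhat ω then (1 : ℝ) else 0)
            then 1 else 0) ∂μ := by
    rw [e1, e2, ← hfin, ← hsub s hs', ← hsub t ht']
    ring
  refine ⟨main, ?_⟩
  rw [main]
  apply integral_nonneg
  intro ω
  apply mul_nonneg (abs_nonneg _)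
  split_ifs <;> norm_num
end

section
/- Let X be a random variable with values in a standard Borel space, let H and Q be integrable real-valued random variables, set δ := E[H | X] − E[Q | X], π̄ := 1{δ ≥ 0}, and let δ̂ be a σ(X)-measurable real-valued random variable with π̂ := 1{δ̂ ≥ 0}. If |δ̂ − δ| ≤ ε almost surely for some ε ≥ 0, then the approximation error satisfies 0 ≤ E[π̄·H + (1 − π̄)·Q] − E[π̂·H + (1 − π̂)·Q] ≤ ε. -/
open MeasureTheory ProbabilityTheory
open scoped Classical

set_option linter.unusedVariables false

theorem statement16
    {Ω 𝒳 : Type*} [MeasurableSpace Ω] [MeasurableSpace 𝒳] [StandardBorelSpace 𝒳]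
    (μ : Measure Ω) [IsProbabilityMeasure μ]
    (X : Ω → 𝒳) (hX : Measurable X)
    (H Q : Ω → ℝ) (hH : Integrable H μ) (hQ : Integrable Q μ)
    (δhat : Ω → ℝ) (hδhat : Measurable[MeasurableSpace.comap X inferInstance] δhat)
    (ε : ℝ) (hε : 0 ≤ ε)
    (hclose : ∀ᵐ ω ∂μ, |δhat ω - ((μ[H | MeasurableSpace.comap X inferInstance]) ω - (μ[Q | MeasurableSpace.comap X inferInstance]) ω)| ≤ ε) :
    let δ : Ω → ℝ := fun ω => (μ[H | MeasurableSpace.comap X inferInstance]) ω - (μ[Q | MeasurableSpace.comap X inferInstance]) ω;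
    let πbar : Ω → ℝ := fun ω => if 0 ≤ δ ω then 1 else 0;
    let πhat : Ω → ℝ := fun ω => if 0 ≤ δhat ω then 1 else 0;
    0 ≤ (∫ ω, (πbar ω * H ω + (1 - πbar ω) * Q ω) ∂μ)
        - (∫ ω, (πhat ω * H ω + (1 - πhat ω) * Q ω) ∂μ)
    ∧ (∫ ω, (πbar ω * H ω + (1 - πbar ω) * Q ω) ∂μ)
        - (∫ ω, (πhat ω * H ω + (1 - πhat ω) * Q ω) ∂μ) ≤ ε := by
  intro δ πbar πhat
  set m := MeasurableSpace.comap X inferInstance with hm_def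
  have hm : m ≤ _ := hX.comap_le
  haveI : SigmaFinite (μ.trim hm) := by
    exact IsFiniteMeasure.toSigmaFinite _
  have hδsm : StronglyMeasurable[m] δ :=
    stronglyMeasurable_condExp.sub stronglyMeasurable_condExp
  have hπbar : StronglyMeasurable[m] πbar :=
    (Measurable.ite (measurableSet_le measurable_const hδsm.measurable)
      measurable_const measurable_const).stronglyMeasurable
  have hπhat : StronglyMeasurable[m] πhat :=
    (Measurable.ite (measurableSet_le measurable_const hδhat)
      measurable_const measurable_const).stronglyMeasurable
  set f : Ω → ℝ := fun ω => πbar ω - πhat ω with hf_def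
  have hfsm : StronglyMeasurable[m] f := hπbar.sub hπhat
  have hfbd : ∀ ω, ‖f ω‖ ≤ 1 := by
    intro ω
    simp only [hf_def, πbar, πhat, Real.norm_eq_abs]
    split_ifs <;> simp
  set g : Ω → ℝ := fun ω => H ω - Q ω with hg_def
  have hg : Integrable g μ := hH.sub hQ
  have hfg : Integrable (f * g) μ :=
    hg.bdd_mul ((hfsm.mono hm).aestronglyMeasurable) (Filter.Eventually.of_forall hfbd)
  have hδint : Integrable δ μ := integrable_condExp.sub integrable_condExp
  have hfδ : Integrable (fun ω => f ω * δ ω) μ :=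
    hδint.bdd_mul ((hfsm.mono hm).aestronglyMeasurable) (Filter.Eventually.of_forall hfbd)
  -- step 1 : the difference of integrals equals ∫ f * g
  have hI1 : (∫ ω, (πbar ω * H ω + (1 - πbar ω) * Q ω) ∂μ)
        - (∫ ω, (πhat ω * H ω + (1 - πhat ω) * Q ω) ∂μ) = ∫ ω, (f * g) ω ∂μ := by
    have h1 : Integrable (fun ω => πbar ω * H ω + (1 - πbar ω) * Q ω) μ := by
      refine Integrable.add (hH.bdd_mul (c := 1) ((hπbar.mono hm).aestronglyMeasurable) (Filter.Eventually.of_forall ?_))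
        (hQ.bdd_mul (c := 1) (((stronglyMeasurable_const.sub hπbar).mono hm).aestronglyMeasurable) (Filter.Eventually.of_forall ?_))
      · intro ω; simp only [πbar, Real.norm_eq_abs]; split_ifs <;> simp
      · intro ω; simp only [πbar, Real.norm_eq_abs]; split_ifs <;> simp
    have h2 : Integrable (fun ω => πhat ω * H ω + (1 - πhat ω) * Q ω) μ := by
      refine Integrable.add (hH.bdd_mul (c := 1) ((hπhat.mono hm).aestronglyMeasurable) (Filter.Eventually.of_forall ?_))
        (hQ.bdd_mul (c := 1) (((stronglyMeasurable_const.sub hπhat).mono hm).aestronglyMeasurable) (Filter.Eventually.of_forall ?_))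
      · intro ω; simp only [πhat, Real.norm_eq_abs]; split_ifs <;> simp
      · intro ω; simp only [πhat, Real.norm_eq_abs]; split_ifs <;> simp
    rw [← integral_sub h1 h2]
    refine integral_congr_ae (Filter.Eventually.of_forall fun ω => ?_)
    simp only [hf_def, hg_def, Pi.mul_apply]
    ring
  -- step 2 : ∫ f * g = ∫ f * δ
  have hI2 : ∫ ω, (f * g) ω ∂μ = ∫ ω, f ω * δ ω ∂μ := by
    rw [← integral_condExp (f := f * g) hm]
    refine integral_congr_ae ?_
    have h1 : μ[f * g|m] =ᵐ[μ] f * μ[g|m] :=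
      condExp_mul_of_stronglyMeasurable_left hfsm hfg hg
    have h2 : μ[g|m] =ᵐ[μ] fun ω => (μ[H|m]) ω - (μ[Q|m]) ω := condExp_sub hH hQ m
    filter_upwards [h1, h2] with ω h1ω h2ω
    simp only [Pi.mul_apply] at h1ω ⊢
    rw [h1ω, h2ω]
  -- step 3 : pointwise bounds
  have hpt : ∀ᵐ ω ∂μ, 0 ≤ f ω * δ ω ∧ f ω * δ ω ≤ ε := by
    filter_upwards [hclose] with ω hω
    have habs : -ε ≤ δhat ω - δ ω ∧ δhat ω - δ ω ≤ ε := abs_le.mp hω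
    rcases le_or_gt 0 (δ ω) with hδ | hδ <;> rcases le_or_gt 0 (δhat ω) with hδh | hδh
    · have hf0 : f ω = 0 := by simp [hf_def, πbar, πhat, hδ, hδh]
      rw [hf0, zero_mul]; exact ⟨le_rfl, hε⟩
    · have hf1 : f ω = 1 := by simp [hf_def, πbar, πhat, hδ, not_le.mpr hδh]
      rw [hf1, one_mul]; exact ⟨hδ, by linarith [habs.1]⟩
    · have hfm : f ω = -1 := by simp [hf_def, πbar, πhat, not_le.mpr hδ, hδh]
      rw [hfm, neg_one_mul]; exact ⟨by linarith, by linarith [habs.2]⟩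
    · have hf0 : f ω = 0 := by simp [hf_def, πbar, πhat, not_le.mpr hδ, not_le.mpr hδh]
      rw [hf0, zero_mul]; exact ⟨le_rfl, hε⟩
  rw [hI1, hI2]
  constructor
  · exact integral_nonneg_of_ae (hpt.mono fun ω h => h.1)
  · calc ∫ ω, f ω * δ ω ∂μ ≤ ∫ _, ε ∂μ :=
          integral_mono_ae hfδ (integrable_const ε) (hpt.mono fun ω h => h.2)
      _ = ε := by simp
end
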